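/- Let R be a ring and let M be an R-module of finite length. Then there are only finitely many isomorphism classes of R-modules N such that N is a direct summand of M (i.e. there exists an R-module P with N ⊕ P ≅ M). -/

import Mathlib

universe u
variable {R : Type u} [Ring R]

section Split
variable {A W : Type u} [AddCommGroup A] [Module R A] [AddCommGroup W] [Module R W]

noncomputable def splitEquiv (g : A →ₗ[R] W) (h : W →ₗ[R] A) (hh : ∀ x, h (g x) = x) :
    W ≃ₗ[R] A × (LinearMap.ker h) where
  toFun w := (h w, ⟨w - g (h w), by simp [LinearMap.mem_ker, hh]⟩)
  invFun x := g x.1 + x.2.1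
  map_add' x y := by ext <;> simp <;> abel
  map_smul' r x := by ext <;> simp [smul_sub]
  left_inv w := by simp
  right_inv x := by
    obtain ⟨a, ⟨w, hw⟩⟩ := x
    ext <;> simp [hh, LinearMap.mem_ker.mp hw]
end Split

section Exchange
variable {A B N P : Type u} [AddCommGroup A] [Module R A] [AddCommGroup B] [Module R B]
  [AddCommGroup N] [Module R N] [AddCommGroup P] [Module R P]

variable (e : (N × P) ≃ₗ[R] (A × B))

/-- `N → A` component. -/
noncomputable def hmap : N →ₗ[R] A :=
  LinearMap.fst R A B ∘ₗ (e : (N × P) →ₗ[R] (A × B)) ∘ₗ LinearMap.inl R N P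

/-- `A → N` component. -/
noncomputable def gmap : A →ₗ[R] N :=
  LinearMap.fst R N P ∘ₗ (e.symm : (A × B) →ₗ[R] (N × P)) ∘ₗ LinearMap.inl R A B

/-- `P → A` component. -/
noncomputable def tmap : P →ₗ[R] A :=
  LinearMap.fst R A B ∘ₗ (e : (N × P) →ₗ[R] (A × B)) ∘ₗ LinearMap.inr R N P

/-- `A → P` component. -/
noncomputable def smap : A →ₗ[R] P :=
  LinearMap.snd R N P ∘ₗ (e.symm : (A × B) →ₗ[R] (N × P)) ∘ₗ LinearMap.inl R A B

lemma fst_e_apply (n : N) (p : P) : (e (n, p)).1 = hmap e n + tmap e p := by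
  have : (n, p) = (n, 0) + ((0 : N), p) := by simp
  rw [this, map_add]
  rfl

lemma hg_ts : hmap e ∘ₗ gmap e + tmap e ∘ₗ smap e = LinearMap.id := by
  ext x
  have h1 : (gmap e x, smap e x) = e.symm (x, 0) := rfl
  simp only [LinearMap.add_apply, LinearMap.comp_apply, LinearMap.id_apply]
  rw [← fst_e_apply, h1, e.apply_symm_apply]
end Exchange

section Exchange2
variable {A B N P : Type u} [AddCommGroup A] [Module R A] [AddCommGroup B] [Module R B]
  [AddCommGroup N] [Module R N] [AddCommGroup P] [Module R P]

theorem exchange_of_isUnit (e : (N × P) ≃ₗ[R] (A × B))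
    (hu : IsUnit (hmap e ∘ₗ gmap e : Module.End R A)) :
    ∃ N₀ : Submodule R N, Nonempty (N ≃ₗ[R] (A × N₀)) ∧ Nonempty ((↥N₀ × P) ≃ₗ[R] B) := by
  obtain ⟨u, hu⟩ := hu
  set ui : Module.End R A := ↑u⁻¹ with hui
  set h' : N →ₗ[R] A := ui ∘ₗ hmap e with hh'
  have hsplit : ∀ x, h' (gmap e x) = x := by
    intro x
    have h1 : (ui * (u : Module.End R A)) x = x := by rw [u.inv_mul]; rfl
    calc h' (gmap e x) = ui ((hmap e ∘ₗ gmap e) x) := rfl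
    _ = ui ((u : Module.End R A) x) := by rw [hu]
    _ = x := h1
  have huui : ∀ y : A, (u : Module.End R A) (ui y) = y := by
    intro y
    have h1 : ((u : Module.End R A) * ui) y = y := by rw [u.mul_inv]; rfl
    exact h1
  set N₀ : Submodule R N := LinearMap.ker h' with hN₀
  have hmem : ∀ n : N, n - gmap e (h' n) ∈ N₀ := by
    intro n
    simp only [hN₀, LinearMap.mem_ker, map_sub, hsplit, sub_self]
  have hn₀ : ∀ z : N, z ∈ N₀ → hmap e z = 0 := by
    intro z hz
    have h0 : ui (hmap e z) = 0 := hz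
    rw [← huui (hmap e z), h0, map_zero]
  have key1 : ∀ (n₀ : ↥N₀) (p : P), (e ((n₀ : N) - gmap e (ui (tmap e p)), p)).1 = 0 := by
    intro n₀ p
    rw [fst_e_apply, map_sub, hn₀ _ n₀.2]
    have : hmap e (gmap e (ui (tmap e p))) = tmap e p := by
      rw [show hmap e (gmap e (ui (tmap e p))) = (hmap e ∘ₗ gmap e) (ui (tmap e p)) from rfl,
        ← hu]
      exact huui _
    rw [this]
    abel
  refine ⟨N₀, ⟨splitEquiv (gmap e) h' hsplit⟩, ⟨?_⟩⟩
  refine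
    { toFun := fun z => (e ((z.1 : N) - gmap e (ui (tmap e z.2)), z.2)).2
      invFun := fun b =>
        (⟨(e.symm (0, b)).1 - gmap e (h' (e.symm (0, b)).1), hmem _⟩, (e.symm (0, b)).2)
      map_add' := ?_
      map_smul' := ?_
      left_inv := ?_
      right_inv := ?_ }
  · intro z w
    have : ((z.1 : N) + (w.1 : N)) - gmap e (ui (tmap e (z.2 + w.2)))
        = ((z.1 : N) - gmap e (ui (tmap e z.2))) + ((w.1 : N) - gmap e (ui (tmap e w.2))) := by
      simp only [map_add]; abel
    simp only [Prod.fst_add, Prod.snd_add, Submodule.coe_add, map_add]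
    have hpair : ((z.1 : N) + (w.1 : N) - (gmap e (ui (tmap e z.2)) + gmap e (ui (tmap e w.2))),
        z.2 + w.2) = ((z.1 : N) - gmap e (ui (tmap e z.2)), z.2)
          + ((w.1 : N) - gmap e (ui (tmap e w.2)), w.2) := by
      rw [Prod.mk_add_mk]
      congr 1
      abel
    rw [hpair, map_add, Prod.snd_add]
  · intro r z
    have : (r • (z.1 : N)) - gmap e (ui (tmap e (r • z.2)))
        = r • ((z.1 : N) - gmap e (ui (tmap e z.2))) := by
      simp only [map_smul, smul_sub]
    simp only [Prod.smul_fst, Prod.smul_snd, Submodule.coe_smul, map_smul, RingHom.id_apply]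
    have hpair : (r • (z.1 : N) - r • gmap e (ui (tmap e z.2)), r • z.2)
        = r • ((z.1 : N) - gmap e (ui (tmap e z.2)), z.2) := by
      rw [Prod.smul_mk, smul_sub]
    rw [hpair, map_smul, Prod.smul_snd]
  · -- left_inv : invFun (toFun z) = z
    rintro ⟨n₀, p⟩
    have hz : e.symm (0, (e ((n₀ : N) - gmap e (ui (tmap e p)), p)).2)
        = ((n₀ : N) - gmap e (ui (tmap e p)), p) := by
      conv_lhs => rw [show ((0 : A), (e ((n₀ : N) - gmap e (ui (tmap e p)), p)).2)
        = e ((n₀ : N) - gmap e (ui (tmap e p)), p) from by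
          rw [← key1 n₀ p]]
      exact e.symm_apply_apply _
    ext
    · simp only [hz]
      have h1 : h' ((n₀ : N) - gmap e (ui (tmap e p))) = - ui (tmap e p) := by
        rw [map_sub, hsplit]
        have : h' (n₀ : N) = 0 := n₀.2
        rw [this]; abel
      rw [h1]
      simp only [map_neg]
      abel
    · simp only [hz]
  · -- right_inv : toFun (invFun b) = b
    intro b
    set w := e.symm (0, b) with hw
    have hw1 : hmap e w.1 + tmap e w.2 = 0 := by
      rw [← fst_e_apply]
      have : (w.1, w.2) = w := rfl
      rw [this, hw, e.apply_symm_apply]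
    have inner : (w.1 - gmap e (h' w.1)) - gmap e (ui (tmap e w.2)) = w.1 := by
      have : ui (tmap e w.2) = - h' w.1 := by
        rw [hh']
        simp only [LinearMap.comp_apply]
        rw [show tmap e w.2 = - hmap e w.1 from by rw [eq_neg_iff_add_eq_zero, add_comm]; exact hw1]
        simp
      rw [this]
      simp only [map_neg]
      abel
    show (e ((w.1 - gmap e (h' w.1)) - gmap e (ui (tmap e w.2)), w.2)).2 = b
    simp only [inner]
    have : (w.1, w.2) = w := rfl
    rw [this, hw, e.apply_symm_apply]
end Exchange2

section Exchange3
variable {A B N P : Type u} [AddCommGroup A] [Module R A] [AddCommGroup B] [Module R B]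
  [AddCommGroup N] [Module R N] [AddCommGroup P] [Module R P]

theorem exchange (e : (N × P) ≃ₗ[R] (A × B))
    (hA : ∀ f : Module.End R A, IsUnit f ∨ IsUnit (1 - f)) :
    (∃ N₀ : Submodule R N, Nonempty (N ≃ₗ[R] (A × N₀)) ∧ Nonempty ((↥N₀ × P) ≃ₗ[R] B))
    ∨ (∃ P₀ : Submodule R P, Nonempty ((N × ↥P₀) ≃ₗ[R] B)) := by
  rcases hA (hmap e ∘ₗ gmap e) with h | h
  · exact Or.inl (exchange_of_isUnit e h)
  · right
    set e' : (P × N) ≃ₗ[R] (A × B) := (LinearEquiv.prodComm R P N).trans e with he'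
    have hpc : (hmap e' ∘ₗ gmap e' : Module.End R A) = tmap e ∘ₗ smap e := by
      ext x; rfl
    have hsum : (hmap e ∘ₗ gmap e : Module.End R A) + tmap e ∘ₗ smap e = 1 := by
      rw [hg_ts e]; rfl
    have hts : (tmap e ∘ₗ smap e : Module.End R A) = 1 - hmap e ∘ₗ gmap e := by
      rw [← hsum]; abel
    obtain ⟨P₀, ⟨_⟩, ⟨e2⟩⟩ := exchange_of_isUnit e' (by rw [hpc, hts]; exact h)
    exact ⟨P₀, ⟨(LinearEquiv.prodComm R N P₀).trans e2⟩⟩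
end Exchange3

section Fitting
variable {A : Type u} [AddCommGroup A] [Module R A]

theorem isUnit_or_isUnit_one_sub [IsNoetherian R A] [IsArtinian R A]
    (hind : ∀ p q : Submodule R A, IsCompl p q → p = ⊥ ∨ q = ⊥)
    (f : Module.End R A) : IsUnit f ∨ IsUnit (1 - f) := by
  obtain ⟨n, hn1, hn⟩ :=
    ((Filter.eventually_ge_atTop 1).and f.eventually_isCompl_ker_pow_range_pow).exists
  rcases hind _ _ hn with hk | hr
  · left
    rw [Module.End.isUnit_iff]
    have hinj : Function.Injective (f ^ n) := by
      rw [← LinearMap.ker_eq_bot]; exact hk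
    have hsurj : Function.Surjective (f ^ n) := by
      rw [← LinearMap.range_eq_top]
      have h2 := hn.codisjoint
      rw [hk] at h2
      exact codisjoint_bot.mp h2.symm
    obtain ⟨m, rfl⟩ : ∃ m, n = m + 1 := ⟨n - 1, by omega⟩
    constructor
    · intro x y hxy
      apply hinj
      rw [pow_succ, Module.End.mul_apply, Module.End.mul_apply, hxy]
    · intro y
      obtain ⟨x, hx⟩ := hsurj y
      exact ⟨(f ^ m) x, by rw [← Module.End.mul_apply, ← pow_succ', hx]⟩
  · right
    exact IsNilpotent.isUnit_one_sub ⟨n, LinearMap.range_eq_bot.mp hr⟩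
end Fitting

section Main
variable (M : Type u) [AddCommGroup M] [Module R M]

/-- The trivial product equivalence. -/
def prodPUnitEquiv (W : Type u) [AddCommGroup W] [Module R W] :
    W ≃ₗ[R] W × PUnit.{u + 1} where
  toFun w := (w, PUnit.unit)
  invFun x := x.1
  map_add' _ _ := rfl
  map_smul' _ _ := rfl
  left_inv _ := rfl
  right_inv _ := rfl

theorem exists_indec [IsNoetherian R M] [IsArtinian R M] :
    ∀ W : Submodule R M, Nontrivial W →
      ∃ A B : ModuleCat.{u} R, Nonempty (↥W ≃ₗ[R] (↥A × ↥B)) ∧ Nontrivial ↥A ∧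
        ∀ f : Module.End R ↥A, IsUnit f ∨ IsUnit (1 - f) := by
  intro W
  induction W using IsArtinian.induction with
  | _ W IH =>
    intro hW
    by_cases hdec : ∀ p q : Submodule R ↥W, IsCompl p q → p = ⊥ ∨ q = ⊥
    · exact ⟨ModuleCat.of R ↥W, ModuleCat.of R PUnit.{u + 1}, ⟨prodPUnitEquiv ↥W⟩, hW,
        fun f => isUnit_or_isUnit_one_sub (A := ↥W) hdec f⟩
    · push_neg at hdec
      obtain ⟨p, q, hpq, hp, hq⟩ := hdec
      have hplt : Submodule.map W.subtype p < W := by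
        refine lt_of_le_of_ne (Submodule.map_subtype_le W p) fun hEq => ?_
        have hptop : p = ⊤ := by
          apply Submodule.map_injective_of_injective W.injective_subtype
          rw [hEq, Submodule.map_subtype_top]
        apply hq
        rw [hptop] at hpq
        exact disjoint_top.mp hpq.disjoint.symm
      have hpn : Nontrivial ↥p := Submodule.nontrivial_iff_ne_bot.mpr hp
      let eP : ↥p ≃ₗ[R] ↥(Submodule.map W.subtype p) :=
        Submodule.equivMapOfInjective _ W.injective_subtype p
      have hmn : Nontrivial ↥(Submodule.map W.subtype p) := eP.symm.toEquiv.nontrivial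
      obtain ⟨A, B, ⟨e1⟩, hAn, hAloc⟩ := IH _ hplt hmn
      refine ⟨A, ModuleCat.of R (↥B × ↥q), ⟨?_⟩, hAn, hAloc⟩
      exact (Submodule.prodEquivOfIsCompl p q hpq).symm.trans
        (((eP.trans e1).prodCongr (LinearEquiv.refl R ↥q)).trans (LinearEquiv.prodAssoc R ↥A ↥B ↥q))

theorem summands_aux [IsNoetherian R M] [IsArtinian R M] :
    ∀ W : Submodule R M, ∃ L : List (ModuleCat.{u} R),
      ∀ (N : Type u) [AddCommGroup N] [Module R N],
        (∃ P : ModuleCat.{u} R, Nonempty ((N × ↥P) ≃ₗ[R] ↥W)) →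
          ∃ G : ModuleCat.{u} R, G ∈ L ∧ Nonempty (N ≃ₗ[R] ↥G) := by
  intro W
  induction W using IsArtinian.induction with
  | _ W IH =>
    rcases subsingleton_or_nontrivial ↥W with hss | hnt
    · refine ⟨[ModuleCat.of R PUnit.{u + 1}], ?_⟩
      rintro N _ _ ⟨P, ⟨ψ⟩⟩
      have hsub : Subsingleton (N × ↥P) := ψ.toEquiv.subsingleton
      have hN : Subsingleton N :=
        ⟨fun a b => congrArg Prod.fst (@Subsingleton.elim _ hsub (a, 0) (b, 0))⟩
      exact ⟨_, List.mem_singleton_self _, ⟨LinearEquiv.ofSubsingleton _ _⟩⟩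
    · obtain ⟨A, B, ⟨eW⟩, hAn, hAloc⟩ := exists_indec M W hnt
      set j : ↥B →ₗ[R] M :=
        W.subtype ∘ₗ (eW.symm : (↥A × ↥B) →ₗ[R] ↥W) ∘ₗ LinearMap.inr R ↥A ↥B with hj
      have hjinj : Function.Injective j := by
        intro x y hxy
        have h1 : eW.symm (0, x) = eW.symm (0, y) := Subtype.ext hxy
        have h2 := eW.symm.injective h1
        exact congrArg Prod.snd h2
      have hW₂le : LinearMap.range j ≤ W := by
        rintro x ⟨b, rfl⟩
        exact ((eW.symm (0, b)) : ↥W).2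
      have hW₂lt : LinearMap.range j < W := by
        refine lt_of_le_of_ne hW₂le fun hEq => ?_
        obtain ⟨a, ha⟩ := exists_ne (0 : ↥A)
        have hx : ((eW.symm (a, 0) : ↥W) : M) ∈ LinearMap.range j := by
          rw [hEq]; exact (eW.symm (a, 0)).2
        obtain ⟨b, hb⟩ := hx
        have h1 : eW.symm (0, b) = eW.symm (a, 0) := Subtype.ext hb
        have h2 := congrArg Prod.fst (eW.symm.injective h1)
        exact ha h2.symm
      obtain ⟨L, hL⟩ := IH _ hW₂lt
      let eB : ↥B ≃ₗ[R] ↥(LinearMap.range j) := LinearEquiv.ofInjective j hjinj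
      refine ⟨L ++ L.map fun (G : ModuleCat.{u} R) => ModuleCat.of R (↥A × ↥G), ?_⟩
      rintro N _ _ ⟨P, ⟨ψ⟩⟩
      rcases exchange (ψ.trans eW) hAloc with ⟨N₀, ⟨e1⟩, ⟨e2⟩⟩ | ⟨P₀, ⟨e2⟩⟩
      · obtain ⟨G, hG, ⟨eG⟩⟩ := hL ↥N₀ ⟨P, ⟨e2.trans eB⟩⟩
        refine ⟨ModuleCat.of R (↥A × ↥G),
          List.mem_append_right _ (List.mem_map_of_mem hG),
          ⟨e1.trans ((LinearEquiv.refl R ↥A).prodCongr eG)⟩⟩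
      · obtain ⟨G, hG, ⟨eG⟩⟩ := hL N ⟨ModuleCat.of R ↥P₀, ⟨e2.trans eB⟩⟩
        exact ⟨G, List.mem_append_left _ hG, ⟨eG⟩⟩
end Main

/-- Let `R` be a ring and `M` an `R`-module of finite length. Then there are only finitely
many isomorphism classes of `R`-modules `N` that are direct summands of `M`, i.e. such that
`N ⊕ P ≅ M` for some `R`-module `P`. -/
theorem finitely_many_direct_summands_of_finite_length
    (R : Type u) [Ring R] (M : Type u) [AddCommGroup M] [Module R M]
    (hM : IsFiniteLength R M) :
    ∃ (k : ℕ) (F : Fin k → ModuleCat.{u} R),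
      ∀ (N : Type u) [AddCommGroup N] [Module R N],
        (∃ P : ModuleCat.{u} R, Nonempty ((N × P) ≃ₗ[R] M)) →
          ∃ i : Fin k, Nonempty (N ≃ₗ[R] F i) := by
  obtain ⟨hNoeth, hArt⟩ := isFiniteLength_iff_isNoetherian_isArtinian.mp hM
  obtain ⟨L, hL⟩ := summands_aux M (⊤ : Submodule R M)
  refine ⟨L.length, fun i => L.get i, ?_⟩
  intro N iN iM h
  obtain ⟨P, ⟨ψ⟩⟩ := h
  obtain ⟨G, hG, ⟨eG⟩⟩ := hL N ⟨P, ⟨ψ.trans (Submodule.topEquiv).symm⟩⟩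
  obtain ⟨i, hi⟩ := List.get_of_mem hG
  subst hi
  exact ⟨i, ⟨eG⟩⟩
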